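/- Let D be any derivation on a commutative ring and let v be an invertible element, u any element, w = u·v^{-1}. Then the vector (u, D(u), ..., D^n(u))^T equals L · (w, D(w), ..., D^n(w))^T, where L is the lower triangular matrix with entries L_{ij} = C(i-1, j-1) D^{i-j}(v) for j ≤ i. Consequently D^n(u/v) = (-1)^n w_n / v^{n+1}, where w_n is the determinant of the (n+1)×(n+1) lower Hessenberg matrix with first column (u, D(u), ..., D^n(u)), second column (v, D(v), ..., D^n(v)), and (i,j) entry C(i-1, j-2) D^{i-j+1}(v) for 3 ≤ j ≤ i+1. -/

import Mathlib

theorem derivation_iterate_leibniz' {R : Type*} [CommRing R] (D : Derivation ℤ R R)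
    (a b : R) : ∀ i : ℕ, (⇑D)^[i] (a * b) =
      ∑ j ∈ Finset.range (i + 1), (i.choose j : R) * (⇑D)^[i - j] a * (⇑D)^[j] b := by
  intro i
  induction i with
  | zero => simp
  | succ i ih =>
    rw [Function.iterate_succ_apply', ih, map_sum]
    have step : ∀ j ∈ Finset.range (i + 1),
        D ((i.choose j : R) * (⇑D)^[i - j] a * (⇑D)^[j] b) =
        (i.choose j : R) * (⇑D)^[i - j + 1] a * (⇑D)^[j] b
          + (i.choose j : R) * (⇑D)^[i - j] a * (⇑D)^[j + 1] b := by
      intro j _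
      rw [Derivation.leibniz, Derivation.leibniz]
      simp only [Derivation.map_natCast, smul_eq_mul, smul_zero, Function.iterate_succ_apply']
      ring
    rw [Finset.sum_congr rfl step, Finset.sum_add_distrib]
    have h1 : ∑ j ∈ Finset.range (i + 1), (i.choose j : R) * (⇑D)^[i - j + 1] a * (⇑D)^[j] b
        = (∑ j ∈ Finset.range i, (i.choose (j+1) : R) * (⇑D)^[i - j] a * (⇑D)^[j+1] b)
          + (⇑D)^[i + 1] a * b := by
      rw [Finset.sum_range_succ']
      congr 1
      · apply Finset.sum_congr rfl
        intro j hj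
        have : i - (j + 1) + 1 = i - j := by
          have := Finset.mem_range.1 hj; omega
        rw [this]
      · simp
    rw [h1]
    have h2 : ∑ j ∈ Finset.range i, (i.choose (j+1) : R) * (⇑D)^[i - j] a * (⇑D)^[j+1] b
        = ∑ j ∈ Finset.range (i+1), (i.choose (j+1) : R) * (⇑D)^[i - j] a * (⇑D)^[j+1] b := by
      rw [Finset.sum_range_succ, Nat.choose_succ_self]
      simp
    rw [h2]
    rw [Finset.sum_range_succ' (fun j => ((i+1).choose j : R) * (⇑D)^[i + 1 - j] a * (⇑D)^[j] b)]
    have h3 : ∀ j, i + 1 - (j + 1) = i - j := fun j => by omega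
    simp only [h3, Nat.choose_zero_right, Nat.cast_one, one_mul, Nat.sub_zero, Function.iterate_zero_apply]
    rw [add_assoc, add_comm ((⇑D)^[i+1] a * b), ← add_assoc, ← Finset.sum_add_distrib]
    congr 1
    apply Finset.sum_congr rfl
    intro j _
    rw [Nat.choose_succ_succ i j]
    push_cast
    ring

/-- Grammatical (derivation) version of the determinantal quotient formula.  Let `D` be a
derivation on a commutative ring `R`, `v` a unit, `u` any element, `w = u·v⁻¹`.  Then
`Dⁱ(u) = Σ_{j≤i} C(i,j) D^{i-j}(v) Dʲ(w)` (the lower triangular matrix-vector identity) and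
consequently `Dⁿ(w) = (-1)ⁿ·wₙ·v^{-(n+1)}`, where `wₙ` is the determinant of the
`(n+1)×(n+1)` lower Hessenberg matrix with first column `(u, D u, …, Dⁿ u)`, second column
`(v, D v, …, Dⁿ v)`, and `(i,j)` entry `C(i-1, j-2)·D^{i-j+1}(v)` for `3 ≤ j ≤ i+1` (1-based). -/
theorem derivation_quotient_det {R : Type*} [CommRing R] (D : Derivation ℤ R R)
    (u : R) (v : Rˣ) (w : R) (hw : w = u * ↑v⁻¹) (n : ℕ) :
    (∀ i : ℕ, i ≤ n → (⇑D)^[i] u =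
        ∑ j ∈ Finset.range (i + 1),
          (i.choose j : R) * (⇑D)^[i - j] (v : R) * (⇑D)^[j] w) ∧
    (⇑D)^[n] w = (-1 : R) ^ n *
        (Matrix.of fun i j : Fin (n + 1) =>
          if (j : ℕ) = 0 then (⇑D)^[(i : ℕ)] u
          else if (j : ℕ) ≤ (i : ℕ) + 1 then
            ((i : ℕ).choose ((j : ℕ) - 1) : R) * (⇑D)^[(i : ℕ) + 1 - (j : ℕ)] (v : R)
          else 0).det * ((↑(v⁻¹) : R) ^ (n + 1)) := by
  have hu : u = w * v := by
    rw [hw, mul_assoc, Units.inv_mul, mul_one]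
  have part1 : ∀ i : ℕ, (⇑D)^[i] u =
      ∑ j ∈ Finset.range (i + 1),
        (i.choose j : R) * (⇑D)^[i - j] (v : R) * (⇑D)^[j] w := by
    intro i
    rw [hu, mul_comm, derivation_iterate_leibniz' D _ _ i]
  refine ⟨fun i _ => part1 i, ?_⟩
  -- the lower triangular matrix L
  set L : Matrix (Fin (n + 1)) (Fin (n + 1)) R :=
    Matrix.of (fun i j : Fin (n + 1) =>
      ((i : ℕ).choose (j : ℕ) : R) * (⇑D)^[(i : ℕ) - (j : ℕ)] (v : R)) with hL
  have hdetL : L.det = (v : R) ^ (n + 1) := by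
    rw [Matrix.det_of_lowerTriangular L]
    · rw [Finset.prod_congr rfl (fun i _ => ?_), Finset.prod_const, Finset.card_univ,
        Fintype.card_fin]
      show ((i : ℕ).choose (i : ℕ) : R) * (⇑D)^[(i : ℕ) - (i : ℕ)] (v : R) = (v : R)
      simp
    · intro i j hij
      have hij' : (i : ℕ) < (j : ℕ) := hij
      show ((i : ℕ).choose (j : ℕ) : R) * _ = 0
      rw [Nat.choose_eq_zero_of_lt hij', Nat.cast_zero, zero_mul]
  set σ : Equiv.Perm (Fin (n + 1)) := (finRotate (n + 1))⁻¹ with hσ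
  have hσ0 : σ 0 = Fin.last n := by
    rw [hσ, Equiv.Perm.inv_def, Equiv.symm_apply_eq, finRotate_last]
  have hσs : ∀ j : Fin n, σ j.succ = j.castSucc := by
    intro j
    rw [hσ, Equiv.Perm.inv_def, Equiv.symm_apply_eq, finRotate_succ_apply,
      Fin.coeSucc_eq_succ]
  set B : Matrix (Fin (n + 1)) (Fin (n + 1)) R := L.submatrix id σ with hB
  have hdetB : B.det = (-1 : R) ^ n * (v : R) ^ (n + 1) := by
    rw [hB, Matrix.det_permute' σ L, hdetL, hσ, map_inv, sign_finRotate]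
    simp
  set c : Fin (n + 1) → R := fun i => (⇑D)^[((σ i : Fin (n + 1)) : ℕ)] w with hc
  -- the Hessenberg matrix equals B with column 0 replaced
  have hM : (Matrix.of fun i j : Fin (n + 1) =>
        if (j : ℕ) = 0 then (⇑D)^[(i : ℕ)] u
        else if (j : ℕ) ≤ (i : ℕ) + 1 then
          ((i : ℕ).choose ((j : ℕ) - 1) : R) * (⇑D)^[(i : ℕ) + 1 - (j : ℕ)] (v : R)
        else 0) = B.updateCol 0 (fun k => ∑ i, c i • B k i) := by
    ext k i
    rw [Matrix.updateCol_apply]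
    rcases eq_or_ne i 0 with hi | hi
    · subst hi
      simp only [if_pos rfl, Matrix.of_apply, Fin.val_zero, if_pos rfl]
      -- show D^[k] u = ∑ i, c i • B k i
      have hre : ∑ i, c i • B k i
          = ∑ j : Fin (n + 1), (⇑D)^[(j : ℕ)] w *
              (((k : ℕ).choose (j : ℕ) : R) * (⇑D)^[(k : ℕ) - (j : ℕ)] (v : R)) := by
        rw [← Equiv.sum_comp σ (fun j : Fin (n + 1) => (⇑D)^[(j : ℕ)] w *
          (((k : ℕ).choose (j : ℕ) : R) * (⇑D)^[(k : ℕ) - (j : ℕ)] (v : R)))]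
        apply Finset.sum_congr rfl
        intro i _
        rw [hc, hB]
        simp [hL, smul_eq_mul]
      rw [hre, Fin.sum_univ_eq_sum_range (fun j => (⇑D)^[j] w *
          (((k : ℕ).choose j : R) * (⇑D)^[(k : ℕ) - j] (v : R)))]
      rw [part1 (k : ℕ)]
      rw [← Finset.sum_subset (Finset.range_subset_range.2 (by omega :
          (k : ℕ) + 1 ≤ n + 1))]
      · apply Finset.sum_congr rfl
        intro j _
        ring
      · intro j _ hj
        rw [Finset.mem_range, not_lt] at hj
        rw [Nat.choose_eq_zero_of_lt (by omega), Nat.cast_zero, zero_mul, mul_zero]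
    · rw [if_neg hi]
      simp only [Matrix.of_apply, if_neg (fun h => hi (Fin.ext (by simpa using h)))]
      induction i using Fin.cases with
      | zero => exact absurd rfl hi
      | succ j =>
        rw [hB]
        simp only [Matrix.submatrix_apply, id_eq, hσs j, hL, Matrix.of_apply]
        have hjv : ((j.succ : Fin (n + 1)) : ℕ) = (j : ℕ) + 1 := rfl
        have hcs : ((j.castSucc : Fin (n + 1)) : ℕ) = (j : ℕ) := rfl
        rw [hjv, hcs]
        rw [if_neg (Nat.add_one_ne_zero _)]
        rcases le_or_gt ((j : ℕ) + 1) ((k : ℕ) + 1) with h | h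
        · rw [if_pos h]
          congr 2
          omega
        · rw [if_neg (not_le.2 h)]
          rw [Nat.choose_eq_zero_of_lt (by omega), Nat.cast_zero, zero_mul]
  rw [hM, Matrix.det_updateCol_sum B 0 c, hdetB, smul_eq_mul]
  simp only [hc]
  rw [hσ0, Fin.val_last]
  have hv : (v : R) ^ (n + 1) * ((↑(v⁻¹) : R) ^ (n + 1)) = 1 := by
    rw [← mul_pow, Units.mul_inv, one_pow]
  have hsq : (-1 : R) ^ n * (-1 : R) ^ n = 1 := by
    rw [← mul_pow]; simp
  calc (⇑D)^[n] w
      = (⇑D)^[n] w * ((-1:R)^n * (-1:R)^n) * ((v:R)^(n+1) * ((↑(v⁻¹):R)^(n+1))) := by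
        rw [hsq, hv, mul_one, mul_one]
    _ = (-1:R)^n * ((⇑D)^[n] w * ((-1:R)^n * (v:R)^(n+1))) * ((↑(v⁻¹):R)^(n+1)) := by ring
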